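/- Let A_1, ..., A_N ∈ ℝ^{n×n} and let P ∈ ℝ^{n×n} be symmetric positive definite with P A_j + A_jᵀ P ≼ 0 for all j = 1, ..., N. Let A : [0,∞) → ℝ^{n×n} take values in the convex hull of {A_1, ..., A_N}, and let z : [0,∞) → ℝⁿ be differentiable with z'(t) = A(t) z(t) and z(0) = b. Then for every c ∈ ℝⁿ and every t ≥ 0, |cᵀ z(t)| ≤ √(cᵀ P⁻¹ c) · √(bᵀ P b). -/

import Mathlib

open Matrix

noncomputable section

/-- `M ≼ 0` for a (symmetric) matrix: `ξᵀ M ξ ≤ 0` for all `ξ`. -/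
def NegSemidef {m : Type*} [Fintype m] (M : Matrix m m ℝ) : Prop :=
  ∀ x : m → ℝ, x ⬝ᵥ M *ᵥ x ≤ 0

/-- Index type for Kronecker powers: `kronIdx n k` indexes the `(k+1)`-st Kronecker power
of an `n`-dimensional object. -/
def kronIdx (n : ℕ) : ℕ → Type
  | 0 => Fin n
  | k+1 => Fin n × kronIdx n k

instance kronIdxFintype (n : ℕ) : ∀ k, Fintype (kronIdx n k)
  | 0 => inferInstanceAs (Fintype (Fin n))
  | k+1 => @instFintypeProd _ _ _ (kronIdxFintype n k)

instance kronIdxDecEq (n : ℕ) : ∀ k, DecidableEq (kronIdx n k)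
  | 0 => inferInstanceAs (DecidableEq (Fin n))
  | k+1 => @instDecidableEqProd _ _ _ (kronIdxDecEq n k)

/-- `matKronPow M k = ⊗^{k+1} M`, the `(k+1)`-st Kronecker power of the matrix `M`
(so `matKronPow M 0 = ⊗¹M = M`). -/
def matKronPow {n : ℕ} (M : Matrix (Fin n) (Fin n) ℝ) : ∀ k, Matrix (kronIdx n k) (kronIdx n k) ℝ
  | 0 => M
  | k+1 => Matrix.kroneckerMap (· * ·) M (matKronPow M k)

/-- Kronecker product of two vectors. -/
def vecKron {α β : Type*} (u : α → ℝ) (v : β → ℝ) : α × β → ℝ := fun p => u p.1 * v p.2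

/-- `vecKronPow x k = ⊗^{k+1} x`, the `(k+1)`-st Kronecker power of the vector `x`. -/
def vecKronPow {n : ℕ} (x : Fin n → ℝ) : ∀ k, kronIdx n k → ℝ
  | 0 => x
  | k+1 => vecKron x (vecKronPow x k)

/-- The lifted matrices: `liftA A k = 𝒜^{k+1}(A)`, with `𝒜¹(A) = A` and
`𝒜^{k+1}(A) = Iₙ ⊗ 𝒜^k(A) + A ⊗ I_{n^k}`. -/
def liftA {n : ℕ} (A : Matrix (Fin n) (Fin n) ℝ) : ∀ k, Matrix (kronIdx n k) (kronIdx n k) ℝ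
  | 0 => A
  | k+1 => Matrix.kroneckerMap (· * ·) (1 : Matrix (Fin n) (Fin n) ℝ) (liftA A k)
      + Matrix.kroneckerMap (· * ·) A (1 : Matrix (kronIdx n k) (kronIdx n k) ℝ)

/-- Index type of the stacked hierarchy system of degree `i`: blocks `k = 0, …, i-1`
corresponding to Kronecker powers `1, …, i`; its cardinality is `ñ_i = n + n² + ⋯ + nⁱ`. -/
abbrev tildeIdx (n i : ℕ) : Type := Σ k : Fin i, kronIdx n k

/-- `Ãⁱ(A) = diag(𝒜¹(A), 𝒜²(A), …, 𝒜ⁱ(A))`. -/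
def tildeA {n : ℕ} (A : Matrix (Fin n) (Fin n) ℝ) (i : ℕ) :
    Matrix (tildeIdx n i) (tildeIdx n i) ℝ :=
  Matrix.blockDiagonal' (fun k : Fin i => liftA A k)

/-- `diag(P, ⊗²P, …, ⊗ⁱP)`. -/
def tildeKronPow {n : ℕ} (P : Matrix (Fin n) (Fin n) ℝ) (i : ℕ) :
    Matrix (tildeIdx n i) (tildeIdx n i) ℝ :=
  Matrix.blockDiagonal' (fun k : Fin i => matKronPow P k)

/-- `ξ̃_i(x) = (x, ⊗²x, …, ⊗ⁱx)`, the stacked vector of Kronecker powers of `x`. -/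
def tildeXi {n : ℕ} (i : ℕ) (x : Fin n → ℝ) : tildeIdx n i → ℝ :=
  fun p => vecKronPow x p.1 p.2

-- Cauchy-Schwarz for dot product
lemma cs_dot {n : ℕ} (a b : Fin n → ℝ) :
    |a ⬝ᵥ b| ≤ Real.sqrt (a ⬝ᵥ a) * Real.sqrt (b ⬝ᵥ b) := by
  have h := Finset.sum_mul_sq_le_sq_mul_sq Finset.univ a b
  have h1 : (a ⬝ᵥ b)^2 ≤ (a ⬝ᵥ a) * (b ⬝ᵥ b) := by
    simpa [dotProduct, sq] using h
  calc |a ⬝ᵥ b| = Real.sqrt ((a ⬝ᵥ b)^2) := (Real.sqrt_sq_eq_abs _).symm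
    _ ≤ Real.sqrt ((a ⬝ᵥ a) * (b ⬝ᵥ b)) := Real.sqrt_le_sqrt h1
    _ = Real.sqrt (a ⬝ᵥ a) * Real.sqrt (b ⬝ᵥ b) :=
        Real.sqrt_mul (Finset.sum_nonneg fun i _ => mul_self_nonneg _) _

open scoped MatrixOrder in
lemma cs_P {n : ℕ} {P : Matrix (Fin n) (Fin n) ℝ} (hP : P.PosSemidef) (u v : Fin n → ℝ) :
    |u ⬝ᵥ P *ᵥ v| ≤ Real.sqrt (u ⬝ᵥ P *ᵥ u) * Real.sqrt (v ⬝ᵥ P *ᵥ v) := by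
  set S := CFC.sqrt P with hS
  have hsym : Sᵀ = S := by
    have := (CFC.sqrt_nonneg P).posSemidef.1.eq
    rwa [conjTranspose_eq_transpose_of_trivial] at this
  have hx : ∀ w : Fin n → ℝ, w ᵥ* S = S *ᵥ w := by
    intro w; rw [← mulVec_transpose, hsym]
  have key : ∀ x y : Fin n → ℝ, x ⬝ᵥ P *ᵥ y = (S *ᵥ x) ⬝ᵥ (S *ᵥ y) := by
    intro x y
    calc x ⬝ᵥ P *ᵥ y = x ⬝ᵥ (S * S) *ᵥ y := by rw [CFC.sqrt_mul_sqrt_self P hP.nonneg]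
      _ = (x ᵥ* S) ⬝ᵥ (S *ᵥ y) := by rw [← mulVec_mulVec, dotProduct_mulVec]
      _ = (S *ᵥ x) ⬝ᵥ (S *ᵥ y) := by rw [hx]
  rw [key, key, key]
  exact cs_dot _ _

lemma negsemi_convex {n : ℕ} (P : Matrix (Fin n) (Fin n) ℝ) :
    Convex ℝ {M : Matrix (Fin n) (Fin n) ℝ | NegSemidef (P * M + Mᵀ * P)} := by
  intro M1 h1 M2 h2 a b ha hb hab x
  have e : P * (a • M1 + b • M2) + (a • M1 + b • M2)ᵀ * P
      = a • (P * M1 + M1ᵀ * P) + b • (P * M2 + M2ᵀ * P) := by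
    simp only [Matrix.mul_add, Matrix.add_mul, transpose_add, transpose_smul,
      Matrix.mul_smul, Matrix.smul_mul, smul_add]
    abel
  rw [e]
  have h1x := h1 x
  have h2x := h2 x
  simp only [Matrix.add_mulVec, Matrix.smul_mulVec, dotProduct_add, dotProduct_smul,
    smul_eq_mul] at h1x h2x ⊢
  nlinarith

lemma hasDerivAt_quad {n : ℕ} (P : Matrix (Fin n) (Fin n) ℝ) (z : ℝ → Fin n → ℝ)
    (w : Fin n → ℝ) (t : ℝ) (hz : HasDerivAt z w t) :
    HasDerivAt (fun s => z s ⬝ᵥ P *ᵥ z s) (w ⬝ᵥ P *ᵥ z t + z t ⬝ᵥ P *ᵥ w) t := by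
  have hi : ∀ i, HasDerivAt (fun s => z s i) (w i) t := fun i => hasDerivAt_pi.mp hz i
  have hinner : ∀ i, HasDerivAt (fun s => (P *ᵥ z s) i) ((P *ᵥ w) i) t := by
    intro i
    simpa [mulVec, dotProduct] using HasDerivAt.fun_sum (fun j (_ : j ∈ Finset.univ) =>
      (hi j).const_mul (P i j))
  have h : HasDerivAt (fun s => ∑ i, z s i * (P *ᵥ z s) i)
      (∑ i, (w i * (P *ᵥ z t) i + z t i * (P *ᵥ w) i)) t :=
    HasDerivAt.fun_sum fun i _ => (hi i).mul (hinner i)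
  simpa [dotProduct, Finset.sum_add_distrib] using h

/-- impulse-response bound. If `P` is symmetric positive definite with
`P Aⱼ + Aⱼᵀ P ≼ 0`, `A(t)` evolves in the convex hull of `{A₁, …, A_N}` on `[0,∞)`, and
`z' = A(t)z`, `z(0) = b`, then `|cᵀz(t)| ≤ √(cᵀP⁻¹c)·√(bᵀPb)` for all `t ≥ 0`. -/
theorem stmt9 {n N : ℕ} (As : Fin N → Matrix (Fin n) (Fin n) ℝ)
    (P : Matrix (Fin n) (Fin n) ℝ) (hP : P.PosDef)
    (hLyap : ∀ j, NegSemidef (P * As j + (As j)ᵀ * P))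
    (A : ℝ → Matrix (Fin n) (Fin n) ℝ)
    (hA : ∀ t : ℝ, 0 ≤ t → A t ∈ convexHull ℝ (Set.range As))
    (z : ℝ → Fin n → ℝ) (b : Fin n → ℝ)
    (hz : ∀ t : ℝ, 0 ≤ t → HasDerivAt z (A t *ᵥ z t) t) (hz0 : z 0 = b) :
    ∀ (c : Fin n → ℝ) (t : ℝ), 0 ≤ t →
      |c ⬝ᵥ z t| ≤ Real.sqrt (c ⬝ᵥ P⁻¹ *ᵥ c) * Real.sqrt (b ⬝ᵥ P *ᵥ b) := by
  intro c t ht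
  have hPsym : Pᵀ = P := by
    have h := hP.isHermitian.eq
    rwa [conjTranspose_eq_transpose_of_trivial] at h
  have hdet : IsUnit P.det := isUnit_iff_ne_zero.mpr hP.det_pos.ne'
  have hPinv : P * P⁻¹ = 1 := mul_nonsing_inv _ hdet
  have hvP : ∀ x : Fin n → ℝ, x ᵥ* P = P *ᵥ x := by
    intro x; rw [← mulVec_transpose, hPsym]
  have hhull : ∀ M ∈ convexHull ℝ (Set.range As), NegSemidef (P * M + Mᵀ * P) := by
    intro M hM
    refine convexHull_min ?_ (negsemi_convex P) hM
    rintro _ ⟨j, rfl⟩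
    exact hLyap j
  set V : ℝ → ℝ := fun s => z s ⬝ᵥ P *ᵥ z s with hVdef
  have hVder : ∀ s : ℝ, 0 ≤ s →
      HasDerivAt V ((A s *ᵥ z s) ⬝ᵥ P *ᵥ z s + z s ⬝ᵥ P *ᵥ (A s *ᵥ z s)) s :=
    fun s hs => hasDerivAt_quad P z _ s (hz s hs)
  have hVnonpos : ∀ s : ℝ, 0 ≤ s →
      (A s *ᵥ z s) ⬝ᵥ P *ᵥ z s + z s ⬝ᵥ P *ᵥ (A s *ᵥ z s) ≤ 0 := by
    intro s hs
    have h := hhull (A s) (hA s hs) (z s)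
    have e : z s ⬝ᵥ (P * A s + (A s)ᵀ * P) *ᵥ z s
        = (A s *ᵥ z s) ⬝ᵥ P *ᵥ z s + z s ⬝ᵥ P *ᵥ (A s *ᵥ z s) := by
      calc z s ⬝ᵥ (P * A s + (A s)ᵀ * P) *ᵥ z s
          = z s ⬝ᵥ (P * A s) *ᵥ z s + z s ⬝ᵥ ((A s)ᵀ * P) *ᵥ z s := by
            rw [add_mulVec, dotProduct_add]
        _ = (A s *ᵥ z s) ⬝ᵥ P *ᵥ z s + z s ⬝ᵥ P *ᵥ (A s *ᵥ z s) := by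
            rw [← mulVec_mulVec (z s) P (A s), ← mulVec_mulVec (z s) (A s)ᵀ P,
              dotProduct_mulVec (z s) (A s)ᵀ, vecMul_transpose, add_comm]
    rw [← e]
    exact h
  have hanti : AntitoneOn V (Set.Ici (0 : ℝ)) := by
    apply antitoneOn_of_deriv_nonpos (convex_Ici 0)
    · intro s hs
      exact (hVder s hs).continuousAt.continuousWithinAt
    · intro s hs
      rw [interior_Ici] at hs
      exact (hVder s hs.le).differentiableAt.differentiableWithinAt
    · intro s hs
      rw [interior_Ici] at hs
      rw [(hVder s hs.le).deriv]
      exact hVnonpos s hs.le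
  have hVt : V t ≤ b ⬝ᵥ P *ᵥ b := by
    have h := hanti Set.self_mem_Ici (Set.mem_Ici.mpr ht) ht
    simpa [hVdef, hz0] using h
  have hc : (P⁻¹ *ᵥ c) ⬝ᵥ P *ᵥ z t = c ⬝ᵥ z t := by
    rw [dotProduct_mulVec, hvP, mulVec_mulVec, hPinv, one_mulVec]
  have hcc : (P⁻¹ *ᵥ c) ⬝ᵥ P *ᵥ (P⁻¹ *ᵥ c) = c ⬝ᵥ P⁻¹ *ᵥ c := by
    rw [mulVec_mulVec, hPinv, one_mulVec, dotProduct_comm]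
  calc |c ⬝ᵥ z t| = |(P⁻¹ *ᵥ c) ⬝ᵥ P *ᵥ z t| := by rw [hc]
    _ ≤ Real.sqrt ((P⁻¹ *ᵥ c) ⬝ᵥ P *ᵥ (P⁻¹ *ᵥ c)) * Real.sqrt (z t ⬝ᵥ P *ᵥ z t) :=
        cs_P hP.posSemidef _ _
    _ ≤ Real.sqrt (c ⬝ᵥ P⁻¹ *ᵥ c) * Real.sqrt (b ⬝ᵥ P *ᵥ b) := by
        rw [hcc]
        exact mul_le_mul_of_nonneg_left (Real.sqrt_le_sqrt hVt) (Real.sqrt_nonneg _)
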